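/- arXiv:1912.03550 — 4 statements merged into one kernel-verified Lean document; each statement's English description precedes it below -/
import Mathlib

section
/- Let C, D, M ∈ ℝ^{n×n} with C invertible and M symmetric positive definite. The following are equivalent: (iii) for all x ∈ ℝⁿ and θ ∈ [-1,1], (θCx+Dx)ᵀ(I+θ²M)⁻¹(θCx+Dx) ≤ (Cx)ᵀ(I+M)⁻¹(Cx) + (Dx)ᵀ(I+M)⁻¹(Dx) + 2θ xᵀCᵀ(I+M)⁻¹Dx; and (iv) for all x ∈ ℝⁿ and θ ∈ [-1,1], (θCx+Dx)ᵀ(I+M⁻¹+θ²I+θ²M)⁻¹(θCx+Dx) ≤ (Cx)ᵀ(I+M)⁻¹(Cx). -/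
open Matrix

variable {n : ℕ}

lemma aux_smul_posSemidef {A : Matrix (Fin n) (Fin n) ℝ} (hA : A.PosSemidef)
    {c : ℝ} (hc : 0 ≤ c) : (c • A).PosSemidef := by
  refine ⟨?_, fun x => ?_⟩
  · have h := hA.1
    rw [Matrix.IsHermitian] at h ⊢
    simp only [Matrix.conjTranspose_smul, h, star_trivial]
  · have := hA.2 x
    simp only [Finsupp.sum, Matrix.smul_apply, smul_eq_mul, star_trivial] at this ⊢
    have h2 := mul_nonneg hc this
    simp only [Finset.mul_sum] at h2
    exact le_of_le_of_eq h2 (Finset.sum_congr rfl fun i _ => Finset.sum_congr rfl fun j _ => by ring)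

lemma aux_N_posDef (M : Matrix (Fin n) (Fin n) ℝ) (hM : M.PosDef) (θ : ℝ) :
    (1 + M⁻¹ + θ ^ 2 • (1 : Matrix (Fin n) (Fin n) ℝ) + θ ^ 2 • M).PosDef := by
  have h1 : (1 + M⁻¹ + θ ^ 2 • (1 : Matrix (Fin n) (Fin n) ℝ) + θ ^ 2 • M)
      = (1 + M⁻¹) + θ ^ 2 • (1 + M) := by
    rw [smul_add]; abel
  rw [h1]
  exact (Matrix.PosDef.one.add hM.inv).add_posSemidef
    (aux_smul_posSemidef (Matrix.PosDef.one.add hM).posSemidef (sq_nonneg θ))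

lemma aux_B1_posDef (M : Matrix (Fin n) (Fin n) ℝ) (hM : M.PosDef) (θ : ℝ) :
    (1 + θ ^ 2 • M).PosDef :=
  Matrix.PosDef.one.add_posSemidef (aux_smul_posSemidef hM.posSemidef (sq_nonneg θ))

lemma aux_key (M : Matrix (Fin n) (Fin n) ℝ) (hM : M.PosDef) (θ : ℝ) :
    (1 + θ ^ 2 • M)⁻¹ - (1 + M)⁻¹
      = (1 - θ ^ 2) • (1 + M⁻¹ + θ ^ 2 • (1 : Matrix (Fin n) (Fin n) ℝ) + θ ^ 2 • M)⁻¹ := by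
  have hMd : IsUnit M.det := hM.det_pos.ne'.isUnit
  have hB1 : IsUnit (1 + θ ^ 2 • M).det := (aux_B1_posDef M hM θ).det_pos.ne'.isUnit
  have hB2 : IsUnit (1 + M).det := (Matrix.PosDef.one.add hM).det_pos.ne'.isUnit
  have hfac : (1 + M⁻¹ + θ ^ 2 • (1 : Matrix (Fin n) (Fin n) ℝ) + θ ^ 2 • M)
      = (1 + M) * M⁻¹ * (1 + θ ^ 2 • M) := by
    simp only [mul_add, add_mul, Matrix.mul_smul, Matrix.smul_mul, one_mul, mul_one,
      Matrix.nonsing_inv_mul M hMd, Matrix.mul_nonsing_inv M hMd]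
    abel
  rw [hfac, Matrix.mul_inv_rev, Matrix.mul_inv_rev, Matrix.nonsing_inv_nonsing_inv M hMd]
  have key : (1 + θ ^ 2 • M)⁻¹ * ((1 + M) - (1 + θ ^ 2 • M)) * (1 + M)⁻¹
      = (1 + θ ^ 2 • M)⁻¹ - (1 + M)⁻¹ := by
    rw [mul_sub, sub_mul, mul_assoc, Matrix.mul_nonsing_inv _ hB2, mul_one,
      Matrix.nonsing_inv_mul _ hB1, one_mul]
  have hdiff : (1 + M) - (1 + θ ^ 2 • M) = (1 - θ ^ 2) • M := by
    rw [sub_smul, one_smul]; abel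
  rw [← key, hdiff]
  rw [Matrix.mul_smul, Matrix.smul_mul, mul_assoc]

lemma aux_symm_dot {A : Matrix (Fin n) (Fin n) ℝ} (hA : Aᵀ = A) (u v : Fin n → ℝ) :
    v ⬝ᵥ A *ᵥ u = u ⬝ᵥ A *ᵥ v := by
  rw [Matrix.dotProduct_mulVec, ← Matrix.mulVec_transpose, hA, dotProduct_comm]

lemma aux_eq2 {A : Matrix (Fin n) (Fin n) ℝ} (hA : Aᵀ = A) (u v : Fin n → ℝ) (θ : ℝ) :
    u ⬝ᵥ A *ᵥ u + v ⬝ᵥ A *ᵥ v + 2 * θ * (u ⬝ᵥ A *ᵥ v)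
      = (θ • u + v) ⬝ᵥ A *ᵥ (θ • u + v) + (1 - θ ^ 2) * (u ⬝ᵥ A *ᵥ u) := by
  have hsym := aux_symm_dot hA u v
  simp only [Matrix.mulVec_add, Matrix.mulVec_smul, add_dotProduct, smul_dotProduct,
    dotProduct_add, dotProduct_smul, smul_eq_mul, hsym]
  ring

lemma aux_eq1 (M : Matrix (Fin n) (Fin n) ℝ) (hM : M.PosDef) (θ : ℝ) (w : Fin n → ℝ) :
    w ⬝ᵥ (1 + θ ^ 2 • M)⁻¹ *ᵥ w
      = w ⬝ᵥ (1 + M)⁻¹ *ᵥ w + (1 - θ ^ 2) *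
        (w ⬝ᵥ (1 + M⁻¹ + θ ^ 2 • (1 : Matrix (Fin n) (Fin n) ℝ) + θ ^ 2 • M)⁻¹ *ᵥ w) := by
  have h : (1 + θ ^ 2 • M)⁻¹ = (1 + M)⁻¹
      + (1 - θ ^ 2) • (1 + M⁻¹ + θ ^ 2 • (1 : Matrix (Fin n) (Fin n) ℝ) + θ ^ 2 • M)⁻¹ := by
    rw [← aux_key M hM θ]; abel
  rw [h, Matrix.add_mulVec, dotProduct_add, Matrix.smul_mulVec, dotProduct_smul,
    smul_eq_mul]

lemma aux_cont (M : Matrix (Fin n) (Fin n) ℝ) (hM : M.PosDef) (u v : Fin n → ℝ) :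
    Continuous fun t : ℝ => (t • u + v) ⬝ᵥ
      (1 + M⁻¹ + t ^ 2 • (1 : Matrix (Fin n) (Fin n) ℝ) + t ^ 2 • M)⁻¹ *ᵥ (t • u + v) := by
  have hN : Continuous fun t : ℝ =>
      (1 + M⁻¹ + t ^ 2 • (1 : Matrix (Fin n) (Fin n) ℝ) + t ^ 2 • M) :=
    ((continuous_const.add ((continuous_pow 2).smul continuous_const)).add
      ((continuous_pow 2).smul continuous_const))
  have hdet : Continuous fun t : ℝ =>
      ((1 + M⁻¹ + t ^ 2 • (1 : Matrix (Fin n) (Fin n) ℝ) + t ^ 2 • M).det)⁻¹ :=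
    hN.matrix_det.inv₀ fun t => (aux_N_posDef M hM t).det_pos.ne'
  have hinv : Continuous fun t : ℝ =>
      (1 + M⁻¹ + t ^ 2 • (1 : Matrix (Fin n) (Fin n) ℝ) + t ^ 2 • M)⁻¹ := by
    have hrw : ∀ t : ℝ,
        (1 + M⁻¹ + t ^ 2 • (1 : Matrix (Fin n) (Fin n) ℝ) + t ^ 2 • M)⁻¹
          = ((1 + M⁻¹ + t ^ 2 • (1 : Matrix (Fin n) (Fin n) ℝ) + t ^ 2 • M).det)⁻¹
            • (1 + M⁻¹ + t ^ 2 • (1 : Matrix (Fin n) (Fin n) ℝ) + t ^ 2 • M).adjugate := by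
      intro t; rw [Matrix.inv_def, Ring.inverse_eq_inv']
    simp only [hrw]
    exact hdet.smul hN.matrix_adjugate
  have hw : Continuous fun t : ℝ => t • u + v :=
    (continuous_id.smul continuous_const).add continuous_const
  exact hw.dotProduct (hinv.matrix_mulVec hw)

/-- Equivalence of conditions (iii) and (iv) in Lemma 4 of the paper. -/
theorem stmt1 {n : ℕ} (C D M : Matrix (Fin n) (Fin n) ℝ)
    (hC : IsUnit C.det) (hM : M.PosDef) :
    (∀ (x : Fin n → ℝ) (θ : ℝ), θ ∈ Set.Icc (-1 : ℝ) 1 →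
      (θ • (C *ᵥ x) + D *ᵥ x) ⬝ᵥ (1 + θ ^ 2 • M)⁻¹ *ᵥ (θ • (C *ᵥ x) + D *ᵥ x) ≤
        (C *ᵥ x) ⬝ᵥ (1 + M)⁻¹ *ᵥ (C *ᵥ x) + (D *ᵥ x) ⬝ᵥ (1 + M)⁻¹ *ᵥ (D *ᵥ x)
          + 2 * θ * ((C *ᵥ x) ⬝ᵥ (1 + M)⁻¹ *ᵥ (D *ᵥ x))) ↔
    (∀ (x : Fin n → ℝ) (θ : ℝ), θ ∈ Set.Icc (-1 : ℝ) 1 →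
      (θ • (C *ᵥ x) + D *ᵥ x) ⬝ᵥ
          (1 + M⁻¹ + θ ^ 2 • (1 : Matrix (Fin n) (Fin n) ℝ) + θ ^ 2 • M)⁻¹ *ᵥ
          (θ • (C *ᵥ x) + D *ᵥ x) ≤
        (C *ᵥ x) ⬝ᵥ (1 + M)⁻¹ *ᵥ (C *ᵥ x)) := by
  have hAsym : ((1 + M)⁻¹)ᵀ = (1 + M)⁻¹ := by
    have h := (Matrix.PosDef.one.add hM).inv.isHermitian
    rw [Matrix.IsHermitian] at h
    simpa using h
  -- reformulation of (iii) at a given x, θ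
  have hiff : ∀ (x : Fin n → ℝ) (θ : ℝ),
      ((θ • (C *ᵥ x) + D *ᵥ x) ⬝ᵥ (1 + θ ^ 2 • M)⁻¹ *ᵥ (θ • (C *ᵥ x) + D *ᵥ x) ≤
        (C *ᵥ x) ⬝ᵥ (1 + M)⁻¹ *ᵥ (C *ᵥ x) + (D *ᵥ x) ⬝ᵥ (1 + M)⁻¹ *ᵥ (D *ᵥ x)
          + 2 * θ * ((C *ᵥ x) ⬝ᵥ (1 + M)⁻¹ *ᵥ (D *ᵥ x))) ↔
      ((1 - θ ^ 2) * ((θ • (C *ᵥ x) + D *ᵥ x) ⬝ᵥ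
          (1 + M⁻¹ + θ ^ 2 • (1 : Matrix (Fin n) (Fin n) ℝ) + θ ^ 2 • M)⁻¹ *ᵥ
          (θ • (C *ᵥ x) + D *ᵥ x)) ≤
        (1 - θ ^ 2) * ((C *ᵥ x) ⬝ᵥ (1 + M)⁻¹ *ᵥ (C *ᵥ x))) := by
    intro x θ
    rw [aux_eq1 M hM θ (θ • (C *ᵥ x) + D *ᵥ x), aux_eq2 hAsym (C *ᵥ x) (D *ᵥ x) θ]
    rw [add_le_add_iff_left]
  constructor
  · -- (iii) → (iv)
    intro h3 x θ hθ
    set u := C *ᵥ x with hu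
    set v := D *ᵥ x with hv
    -- the inequality holds on the open interval
    have hopen : ∀ t ∈ Set.Ioo (-1 : ℝ) 1,
        (t • u + v) ⬝ᵥ
          (1 + M⁻¹ + t ^ 2 • (1 : Matrix (Fin n) (Fin n) ℝ) + t ^ 2 • M)⁻¹ *ᵥ
          (t • u + v) ≤ u ⬝ᵥ (1 + M)⁻¹ *ᵥ u := by
      intro t ht
      have ht' : t ∈ Set.Icc (-1 : ℝ) 1 := Set.Ioo_subset_Icc_self ht
      have := (hiff x t).1 (h3 x t ht')
      have hpos : 0 < 1 - t ^ 2 := by nlinarith [ht.1, ht.2]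
      exact le_of_mul_le_mul_left this hpos
    -- extend to the closed interval by continuity
    have hclosed : IsClosed {t : ℝ | (t • u + v) ⬝ᵥ
        (1 + M⁻¹ + t ^ 2 • (1 : Matrix (Fin n) (Fin n) ℝ) + t ^ 2 • M)⁻¹ *ᵥ
        (t • u + v) ≤ u ⬝ᵥ (1 + M)⁻¹ *ᵥ u} :=
      isClosed_le (aux_cont M hM u v) continuous_const
    have hsub : Set.Icc (-1 : ℝ) 1 ⊆ {t : ℝ | (t • u + v) ⬝ᵥ
        (1 + M⁻¹ + t ^ 2 • (1 : Matrix (Fin n) (Fin n) ℝ) + t ^ 2 • M)⁻¹ *ᵥ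
        (t • u + v) ≤ u ⬝ᵥ (1 + M)⁻¹ *ᵥ u} := by
      have : Set.Icc (-1 : ℝ) 1 = closure (Set.Ioo (-1 : ℝ) 1) := by
        rw [closure_Ioo (by norm_num : (-1 : ℝ) ≠ 1)]
      rw [this]
      exact hclosed.closure_subset_iff.2 hopen
    exact hsub hθ
  · -- (iv) → (iii)
    intro h4 x θ hθ
    rw [hiff x θ]
    have h1 : 0 ≤ 1 - θ ^ 2 := by nlinarith [hθ.1, hθ.2]
    exact mul_le_mul_of_nonneg_left (h4 x θ hθ) h1
end

section
/- Under the setup of the Riccati lemma, the scalar minimax identity holds: min_u max_{i∈{−1,1}} { xᵀQx + uᵀRu + (iAx+Bu)ᵀS(iAx+Bu) − 2i⟨A,Y⟩ } = max_{θ∈[−1,1]} { xᵀTx − θ² xᵀ(T−P)x − 2θ⟨A,Y⟩ }, where T = Q+AᵀSA, the maximizing θ is θ̂ = −sat(⟨A,Y⟩ / xᵀ(T−P)x), and the unique minimizing u is û = −θ̂Kx. -/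
open Matrix

/-- Saturation: `sat y = y` for `|y| ≤ 1`, `sign y` otherwise. -/
noncomputable def sat (y : ℝ) : ℝ := max (-1) (min 1 y)

private lemma conj_dot' {n m : ℕ} (C : Matrix (Fin n) (Fin m) ℝ) (S : Matrix (Fin n) (Fin n) ℝ)
    (v : Fin m → ℝ) (z : Fin n → ℝ) :
    v ⬝ᵥ (Cᵀ * S) *ᵥ z = (C *ᵥ v) ⬝ᵥ S *ᵥ z := by
  rw [← Matrix.mulVec_mulVec, Matrix.dotProduct_mulVec, Matrix.vecMul_transpose]

private lemma sym_dot' {m : ℕ} {M : Matrix (Fin m) (Fin m) ℝ} (hM : Mᵀ = M) (u v : Fin m → ℝ) :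
    u ⬝ᵥ M *ᵥ v = v ⬝ᵥ M *ᵥ u := by
  rw [Matrix.dotProduct_mulVec, ← Matrix.mulVec_transpose, hM, dotProduct_comm]

private lemma TP_eq' {n m : ℕ} (A : Matrix (Fin n) (Fin n) ℝ) (B : Matrix (Fin n) (Fin m) ℝ)
    (S Q T P : Matrix (Fin n) (Fin n) ℝ) (R : Matrix (Fin m) (Fin m) ℝ)
    (K : Matrix (Fin m) (Fin n) ℝ)
    (hSs : Sᵀ = S) (hMs : (R + Bᵀ * S * B)ᵀ = R + Bᵀ * S * B)
    (hMK : (R + Bᵀ * S * B) * K = Bᵀ * S * A)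
    (hPdef : P = Q + Kᵀ * R * K + (A - B * K)ᵀ * S * (A - B * K))
    (hT : T = Q + Aᵀ * S * A) :
    T - P = Kᵀ * (R + Bᵀ * S * B) * K := by
  have h3 : (B * K)ᵀ * S * A = Kᵀ * ((R + Bᵀ * S * B) * K) := by
    rw [hMK, Matrix.transpose_mul]
    simp [Matrix.mul_assoc]
  have h2 : Aᵀ * S * (B * K) = Kᵀ * (R + Bᵀ * S * B) * K := by
    have ht : ((R + Bᵀ * S * B) * K)ᵀ = Aᵀ * S * B := by
      rw [hMK, Matrix.transpose_mul, Matrix.transpose_mul, Matrix.transpose_transpose, hSs,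
        Matrix.mul_assoc]
    calc Aᵀ * S * (B * K) = ((R + Bᵀ * S * B) * K)ᵀ * K := by
          rw [ht]; simp [Matrix.mul_assoc]
      _ = Kᵀ * (R + Bᵀ * S * B) * K := by rw [Matrix.transpose_mul, hMs, Matrix.mul_assoc]
  have h4 : (B * K)ᵀ * S * (B * K) = Kᵀ * (Bᵀ * S * B) * K := by
    rw [Matrix.transpose_mul]
    simp [Matrix.mul_assoc]
  have expand : (A - B * K)ᵀ * S * (A - B * K)
      = Aᵀ * S * A - Aᵀ * S * (B * K) - ((B * K)ᵀ * S * A - (B * K)ᵀ * S * (B * K)) := by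
    rw [Matrix.transpose_sub, sub_mul, sub_mul, mul_sub, mul_sub]
  have h5 : Kᵀ * R * K + Kᵀ * (Bᵀ * S * B) * K = Kᵀ * (R + Bᵀ * S * B) * K := by
    rw [Matrix.mul_add, Matrix.add_mul]
  rw [hT, hPdef, expand, h2, h3, h4]
  rw [Matrix.mul_assoc Kᵀ (R + Bᵀ * S * B) K] at h5 ⊢
  rw [← h5]
  abel

set_option maxHeartbeats 1000000 in
/-- Lemma 2 of the paper: the scalar minimax identity
`min_u max_{i=±1} {xᵀQx + uᵀRu + |iAx+Bu|²_S − 2i⟨A,Y⟩}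
  = max_{θ∈[−1,1]} {xᵀTx − θ²xᵀ(T−P)x − 2θ⟨A,Y⟩}`,
with maximizing `θ̂ = −sat(⟨A,Y⟩/xᵀ(T−P)x)` and unique minimizer `û = −θ̂Kx`. -/
theorem stmt7 {n m : ℕ}
    (A Y : Matrix (Fin n) (Fin n) ℝ) (B : Matrix (Fin n) (Fin m) ℝ)
    (Q S P : Matrix (Fin n) (Fin n) ℝ) (R : Matrix (Fin m) (Fin m) ℝ)
    (hQ : Q.PosDef) (hR : R.PosDef) (hS : S.PosDef) (hP : P.PosDef)
    (K : Matrix (Fin m) (Fin n) ℝ) (hK : K = (R + Bᵀ * S * B)⁻¹ * Bᵀ * S * A)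
    (hPdef : P = Q + Kᵀ * R * K + (A - B * K)ᵀ * S * (A - B * K))
    (T : Matrix (Fin n) (Fin n) ℝ) (hT : T = Q + Aᵀ * S * A)
    (hTP : (T - P).PosDef)
    (x : Fin n → ℝ) (hx : x ≠ 0)
    (φ : (Fin m → ℝ) → ℝ → ℝ)
    (hφ : ∀ u i, φ u i = x ⬝ᵥ Q *ᵥ x + u ⬝ᵥ R *ᵥ u
        + (i • (A *ᵥ x) + B *ᵥ u) ⬝ᵥ S *ᵥ (i • (A *ᵥ x) + B *ᵥ u)
        - 2 * i * (Aᵀ * Y).trace)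
    (ψ : ℝ → ℝ)
    (hψ : ∀ θ, ψ θ = x ⬝ᵥ T *ᵥ x - θ ^ 2 * (x ⬝ᵥ (T - P) *ᵥ x)
        - 2 * θ * (Aᵀ * Y).trace)
    (θhat : ℝ) (hθhat : θhat = -sat ((Aᵀ * Y).trace / (x ⬝ᵥ (T - P) *ᵥ x)))
    (uhat : Fin m → ℝ) (huhat : uhat = -(θhat • (K *ᵥ x))) :
    IsGreatest {r : ℝ | ∃ θ ∈ Set.Icc (-1 : ℝ) 1, r = ψ θ} (ψ θhat) ∧
    IsLeast {r : ℝ | ∃ u : Fin m → ℝ, r = max (φ u 1) (φ u (-1))} (ψ θhat) ∧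
    max (φ uhat 1) (φ uhat (-1)) = ψ θhat ∧
    (∀ u : Fin m → ℝ, max (φ u 1) (φ u (-1)) = ψ θhat → u = uhat) := by
  classical
  have hSs : Sᵀ = S := by
    have h : Sᴴ = S := hS.1
    rwa [Matrix.conjTranspose_eq_transpose_of_trivial] at h
  have hRs : Rᵀ = R := by
    have h : Rᴴ = R := hR.1
    rwa [Matrix.conjTranspose_eq_transpose_of_trivial] at h
  set M : Matrix (Fin m) (Fin m) ℝ := R + Bᵀ * S * B with hMdef
  have hMs : Mᵀ = M := by
    rw [hMdef]
    simp [Matrix.transpose_add, Matrix.transpose_mul, Matrix.mul_assoc, hSs, hRs]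
  have hMpos : M.PosDef := by
    rw [hMdef]
    apply hR.add_posSemidef
    have h := hS.posSemidef.conjTranspose_mul_mul_same B
    rwa [show Bᴴ = Bᵀ from Matrix.conjTranspose_eq_transpose_of_trivial B] at h
  have hMdet : IsUnit M.det := hMpos.det_pos.ne'.isUnit
  have hMK : M * K = Bᵀ * S * A := by
    rw [hK, show M⁻¹ * Bᵀ * S * A = M⁻¹ * (Bᵀ * S * A) by simp [Matrix.mul_assoc]]
    exact Matrix.mul_nonsing_inv_cancel_left _ _ hMdet
  have hTPmat : T - P = Kᵀ * M * K := TP_eq' A B S Q T P R K hSs hMs hMK hPdef hT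
  -- dot product facts
  have hc : 0 < x ⬝ᵥ (T - P) *ᵥ x := by simpa using hTP.dotProduct_mulVec_pos hx
  have hqnn : ∀ v : Fin m → ℝ, 0 ≤ v ⬝ᵥ M *ᵥ v := fun v => by
    simpa using hMpos.posSemidef.dotProduct_mulVec_nonneg v
  have hqpos : ∀ v : Fin m → ℝ, v ≠ 0 → 0 < v ⬝ᵥ M *ᵥ v := fun v hv => by
    simpa using hMpos.dotProduct_mulVec_pos hv
  have hwc : (K *ᵥ x) ⬝ᵥ M *ᵥ (K *ᵥ x) = x ⬝ᵥ (T - P) *ᵥ x := by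
    rw [hTPmat, ← Matrix.mulVec_mulVec, conj_dot']
  have hxT : x ⬝ᵥ T *ᵥ x = x ⬝ᵥ Q *ᵥ x + (A *ᵥ x) ⬝ᵥ S *ᵥ (A *ᵥ x) := by
    rw [hT, Matrix.add_mulVec, dotProduct_add, ← Matrix.mulVec_mulVec, conj_dot']
  have hqu : ∀ u : Fin m → ℝ, u ⬝ᵥ M *ᵥ u
      = u ⬝ᵥ R *ᵥ u + (B *ᵥ u) ⬝ᵥ S *ᵥ (B *ᵥ u) := by
    intro u
    rw [hMdef, Matrix.add_mulVec, dotProduct_add, ← Matrix.mulVec_mulVec, conj_dot']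
  have hbu : ∀ u : Fin m → ℝ, u ⬝ᵥ M *ᵥ (K *ᵥ x) = (B *ᵥ u) ⬝ᵥ S *ᵥ (A *ᵥ x) := by
    intro u
    rw [Matrix.mulVec_mulVec, hMK, ← Matrix.mulVec_mulVec, conj_dot']
  have hSexp : ∀ (i : ℝ) (u : Fin m → ℝ),
      (i • (A *ᵥ x) + B *ᵥ u) ⬝ᵥ S *ᵥ (i • (A *ᵥ x) + B *ᵥ u)
      = i ^ 2 * ((A *ᵥ x) ⬝ᵥ S *ᵥ (A *ᵥ x)) + 2 * i * ((B *ᵥ u) ⬝ᵥ S *ᵥ (A *ᵥ x))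
        + (B *ᵥ u) ⬝ᵥ S *ᵥ (B *ᵥ u) := by
    intro i u
    have hsym := sym_dot' hSs (A *ᵥ x) (B *ᵥ u)
    simp only [Matrix.mulVec_add, Matrix.mulVec_smul, dotProduct_add, add_dotProduct,
      smul_dotProduct, dotProduct_smul, smul_eq_mul]
    rw [hsym]
    ring
  have hφ1 : ∀ u : Fin m → ℝ, φ u 1
      = x ⬝ᵥ T *ᵥ x + u ⬝ᵥ M *ᵥ u + 2 * (u ⬝ᵥ M *ᵥ (K *ᵥ x)) - 2 * (Aᵀ * Y).trace := by
    intro u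
    rw [hφ, hSexp, hxT, hqu, hbu]
    ring
  have hφm1 : ∀ u : Fin m → ℝ, φ u (-1)
      = x ⬝ᵥ T *ᵥ x + u ⬝ᵥ M *ᵥ u - 2 * (u ⬝ᵥ M *ᵥ (K *ᵥ x)) + 2 * (Aᵀ * Y).trace := by
    intro u
    rw [hφ, hSexp, hxT, hqu, hbu]
    ring
  have hqexp : ∀ (u : Fin m → ℝ) (t : ℝ),
      (u + t • (K *ᵥ x)) ⬝ᵥ M *ᵥ (u + t • (K *ᵥ x))
      = u ⬝ᵥ M *ᵥ u + 2 * t * (u ⬝ᵥ M *ᵥ (K *ᵥ x)) + t ^ 2 * (x ⬝ᵥ (T - P) *ᵥ x) := by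
    intro u t
    have hsym := sym_dot' hMs (K *ᵥ x) u
    simp only [Matrix.mulVec_add, Matrix.mulVec_smul, dotProduct_add, add_dotProduct,
      smul_dotProduct, dotProduct_smul, smul_eq_mul]
    rw [hsym, hwc]
    ring
  set aa : ℝ := (Aᵀ * Y).trace with haa
  set cc : ℝ := x ⬝ᵥ (T - P) *ᵥ x with hccdef
  set xT : ℝ := x ⬝ᵥ T *ᵥ x with hxTdef
  -- case analysis on the saturation
  have hcase : (θhat = -1 ∧ cc ≤ aa)
      ∨ (θhat = 1 ∧ aa ≤ -(cc))
      ∨ ((cc) * θhat = -aa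
          ∧ -(cc) ≤ aa
          ∧ aa ≤ cc) := by
    rcases le_or_gt 1 (aa / (cc)) with h1 | h1
    · refine Or.inl ⟨?_, (one_le_div hc).mp h1⟩
      rw [hθhat]
      unfold sat
      rw [min_eq_left h1, max_eq_right (by norm_num : (-1:ℝ) ≤ 1)]
    · rcases le_or_gt (aa / (cc)) (-1) with h2 | h2
      · refine Or.inr (Or.inl ⟨?_, ?_⟩)
        · rw [hθhat]
          unfold sat
          rw [min_eq_right (by linarith), max_eq_left h2]
          norm_num
        · have := (div_le_iff₀ hc).mp h2
          linarith
      · refine Or.inr (Or.inr ⟨?_, ?_, ?_⟩)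
        · rw [hθhat]
          unfold sat
          rw [min_eq_right h1.le, max_eq_right h2.le]
          field_simp
        · have := (lt_div_iff₀ hc).mp h2
          linarith
        · exact ((div_lt_one hc).mp h1).le
  have hθmem : θhat ∈ Set.Icc (-1 : ℝ) 1 := by
    rcases hcase with ⟨hq, _⟩ | ⟨hq, _⟩ | ⟨hq, hl, hr⟩
    · rw [hq]; constructor <;> norm_num
    · rw [hq]; constructor <;> norm_num
    · constructor <;> nlinarith [hc]
  -- Part 1 : IsGreatest
  have hub : ∀ θ ∈ Set.Icc (-1 : ℝ) 1, ψ θ ≤ ψ θhat := by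
    rintro θ ⟨hθl, hθr⟩
    rw [hψ, hψ]
    rcases hcase with ⟨hq, hac⟩ | ⟨hq, hac⟩ | ⟨hq, hl, hr⟩
    · rw [hq]
      nlinarith [sq_nonneg (θ + 1), hc,
        mul_nonneg (by linarith : (0:ℝ) ≤ 1 + θ)
          (by linarith : (0:ℝ) ≤ aa - cc)]
    · rw [hq]
      nlinarith [sq_nonneg (θ - 1), hc,
        mul_nonneg (by linarith : (0:ℝ) ≤ 1 - θ)
          (by linarith : (0:ℝ) ≤ -aa - cc)]
    · nlinarith [sq_nonneg ((cc) * θ + aa), hc, hq,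
        sq_nonneg ((cc) * θhat + aa)]
  -- values at uhat
  have h1hat : uhat ⬝ᵥ M *ᵥ uhat = θhat ^ 2 * (cc) := by
    rw [huhat]
    simp only [Matrix.mulVec_neg, Matrix.mulVec_smul, dotProduct_neg, neg_dotProduct,
      dotProduct_smul, smul_dotProduct, smul_eq_mul, neg_neg]
    rw [hwc]
    ring
  have h2hat : uhat ⬝ᵥ M *ᵥ (K *ᵥ x) = -(θhat * (cc)) := by
    rw [huhat]
    simp only [Matrix.mulVec_neg, Matrix.mulVec_smul, dotProduct_neg, neg_dotProduct,
      dotProduct_smul, smul_dotProduct, smul_eq_mul, neg_neg]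
    rw [hwc]
  -- Part 3 : value at uhat
  have hmax : max (φ uhat 1) (φ uhat (-1)) = ψ θhat := by
    rw [hφ1 uhat, hφm1 uhat, h1hat, h2hat, hψ]
    rcases hcase with ⟨hq, hac⟩ | ⟨hq, hac⟩ | ⟨hq, hl, hr⟩
    · rw [hq, max_eq_right (by norm_num; linarith)]
      norm_num
      ring
    · rw [hq, max_eq_left (by norm_num; linarith)]
      norm_num
      ring
    · have e : xT + θhat ^ 2 * cc + 2 * -(θhat * cc) - 2 * aa
          = xT + θhat ^ 2 * cc - 2 * -(θhat * cc) + 2 * aa := by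
        linear_combination (-4) * hq
      rw [e, max_self]
      linear_combination (2 * θhat + 2) * hq
  -- lower bound for the max over i
  have hlow : ∀ u : Fin m → ℝ,
      ψ θhat + (u + θhat • (K *ᵥ x)) ⬝ᵥ M *ᵥ (u + θhat • (K *ᵥ x))
        ≤ max (φ u 1) (φ u (-1)) := by
    intro u
    have l1 : φ u 1 ≤ max (φ u 1) (φ u (-1)) := le_max_left _ _
    have l2 : φ u (-1) ≤ max (φ u 1) (φ u (-1)) := le_max_right _ _
    have comb : (1 + θhat) / 2 * (φ u 1) + (1 - θhat) / 2 * (φ u (-1))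
        = ψ θhat + (u + θhat • (K *ᵥ x)) ⬝ᵥ M *ᵥ (u + θhat • (K *ᵥ x)) := by
      rw [hφ1 u, hφm1 u, hqexp u θhat, hψ]
      ring
    have m1 := mul_nonneg (by linarith [hθmem.1] : (0:ℝ) ≤ (1 + θhat) / 2)
      (sub_nonneg.mpr l1)
    have m2 := mul_nonneg (by linarith [hθmem.2] : (0:ℝ) ≤ (1 - θhat) / 2)
      (sub_nonneg.mpr l2)
    nlinarith [comb, m1, m2]
  refine ⟨⟨⟨θhat, hθmem, rfl⟩, ?_⟩, ⟨⟨uhat, hmax.symm⟩, ?_⟩, hmax, ?_⟩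
  · rintro r ⟨θ, hθ, rfl⟩
    exact hub θ hθ
  · rintro r ⟨u, rfl⟩
    have h := hlow u
    have hq := hqnn (u + θhat • (K *ᵥ x))
    linarith
  · intro u hu
    have h := hlow u
    rw [hu] at h
    have hzero : u + θhat • (K *ᵥ x) = 0 := by
      by_contra hne
      have := hqpos _ hne
      linarith
    have : u = -(θhat • (K *ᵥ x)) := eq_neg_of_add_eq_zero_left hzero
    rw [this, huhat]
end

section
/- Let γ > 0, T, P symmetric with P ≺ T ≺ γ²I, and M := (γ²I−T)^{−1/2}(T−P)(γ²I−T)^{−1/2}. Then (γ²I−T)^{1/2}(2I + M + M⁻¹)(γ²I−T)^{1/2} = (γ²I−P)(T−P)⁻¹(γ²I−P). -/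
open Matrix

section

open scoped ComplexOrder

/-- The positive semidefinite square root of a positive semidefinite matrix
(the definition Mathlib had in December 2024, since removed). -/
noncomputable def Matrix.PosSemidef.sqrt {n 𝕜 : Type*} [Fintype n] [RCLike 𝕜] [DecidableEq n]
    {A : Matrix n n 𝕜} (hA : A.PosSemidef) : Matrix n n 𝕜 :=
  hA.1.eigenvectorUnitary.1 * diagonal ((↑) ∘ (Real.sqrt ∘ hA.1.eigenvalues)) *
    (star hA.1.eigenvectorUnitary : Matrix n n 𝕜)

end

open scoped ComplexOrder in
theorem Matrix.PosSemidef.sqrt_mul_self {n 𝕜 : Type*} [Fintype n] [RCLike 𝕜] [DecidableEq n]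
    {A : Matrix n n 𝕜} (hA : A.PosSemidef) : hA.sqrt * hA.sqrt = A := by
  have hU : (star hA.1.eigenvectorUnitary : Matrix n n 𝕜) * hA.1.eigenvectorUnitary.1 = 1 :=
    Unitary.star_mul_self_of_mem hA.1.eigenvectorUnitary.2
  conv_rhs => rw [hA.1.spectral_theorem, Unitary.conjStarAlgAut_apply]
  unfold Matrix.PosSemidef.sqrt
  have key : diagonal (((↑) : ℝ → 𝕜) ∘ (Real.sqrt ∘ hA.1.eigenvalues)) *
      diagonal (((↑) : ℝ → 𝕜) ∘ (Real.sqrt ∘ hA.1.eigenvalues)) =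
      diagonal (RCLike.ofReal ∘ hA.1.eigenvalues) := by
    rw [diagonal_mul_diagonal]
    congr 1
    funext i
    simp only [Function.comp_apply]
    rw [← RCLike.ofReal_mul, Real.mul_self_sqrt (hA.eigenvalues_nonneg i)]
  calc _ = hA.1.eigenvectorUnitary.1 * diagonal (((↑) : ℝ → 𝕜) ∘ (Real.sqrt ∘ hA.1.eigenvalues)) *
        ((star hA.1.eigenvectorUnitary : Matrix n n 𝕜) * hA.1.eigenvectorUnitary.1) *
        diagonal (((↑) : ℝ → 𝕜) ∘ (Real.sqrt ∘ hA.1.eigenvalues)) *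
        (star hA.1.eigenvectorUnitary : Matrix n n 𝕜) := by simp only [mul_assoc]
    _ = _ := by rw [hU, mul_one, mul_assoc _ (diagonal _) (diagonal _), key]

/-- With `M = (γ²I−T)^{−1/2}(T−P)(γ²I−T)^{−1/2}`:
`(γ²I−T)^{1/2}(2I + M + M⁻¹)(γ²I−T)^{1/2} = (γ²I−P)(T−P)⁻¹(γ²I−P)`. -/
theorem stmt12 {n : ℕ} (γ : ℝ) (hγ : 0 < γ)
    (T P : Matrix (Fin n) (Fin n) ℝ) (hTs : T.IsSymm) (hPs : P.IsSymm)
    (hTP : (T - P).PosDef)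
    (hγT : (γ ^ 2 • (1 : Matrix (Fin n) (Fin n) ℝ) - T).PosDef)
    (M : Matrix (Fin n) (Fin n) ℝ)
    (hM : M = (hγT.posSemidef.sqrt)⁻¹ * (T - P) * (hγT.posSemidef.sqrt)⁻¹) :
    hγT.posSemidef.sqrt * ((2 : ℝ) • (1 : Matrix (Fin n) (Fin n) ℝ) + M + M⁻¹) *
        hγT.posSemidef.sqrt =
      (γ ^ 2 • (1 : Matrix (Fin n) (Fin n) ℝ) - P) * (T - P)⁻¹ *
        (γ ^ 2 • (1 : Matrix (Fin n) (Fin n) ℝ) - P) := by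
  set S := hγT.posSemidef.sqrt with hS
  have hSS : S * S = γ ^ 2 • (1 : Matrix (Fin n) (Fin n) ℝ) - T :=
    hγT.posSemidef.sqrt_mul_self
  have hSdet : IsUnit S.det := by
    have h2 : S.det * S.det = (γ ^ 2 • (1 : Matrix (Fin n) (Fin n) ℝ) - T).det := by
      rw [← det_mul, hSS]
    have : S.det ≠ 0 := by
      intro h
      rw [h, mul_zero] at h2
      exact (ne_of_gt hγT.det_pos) h2.symm
    exact isUnit_iff_ne_zero.mpr this
  have hBdet : IsUnit (T - P).det := isUnit_iff_ne_zero.mpr (ne_of_gt hTP.det_pos)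
  have hSinv : S * S⁻¹ = 1 := mul_nonsing_inv _ hSdet
  have hSinv' : S⁻¹ * S = 1 := nonsing_inv_mul _ hSdet
  have hBinv : (T - P) * (T - P)⁻¹ = 1 := mul_nonsing_inv _ hBdet
  have hBinv' : (T - P)⁻¹ * (T - P) = 1 := nonsing_inv_mul _ hBdet
  have hMinv : M⁻¹ = S * (T - P)⁻¹ * S := by
    rw [hM, Matrix.mul_inv_rev, Matrix.mul_inv_rev, Matrix.nonsing_inv_nonsing_inv _ hSdet, ← mul_assoc]
  -- key algebra: (A+B) B⁻¹ (A+B) = A B⁻¹ A + 2A + B where A = S*S, B = T - P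
  have hAP : γ ^ 2 • (1 : Matrix (Fin n) (Fin n) ℝ) - P = S * S + (T - P) := by
    rw [hSS]; abel
  rw [hMinv, hM, hAP]
  have lhs_eq : S * ((2 : ℝ) • (1 : Matrix (Fin n) (Fin n) ℝ) + S⁻¹ * (T - P) * S⁻¹ + S * (T - P)⁻¹ * S) * S
      = (2 : ℝ) • (S * S) + (T - P) + S * S * (T - P)⁻¹ * (S * S) := by
    have t1 : S * ((2 : ℝ) • (1 : Matrix (Fin n) (Fin n) ℝ)) * S = (2 : ℝ) • (S * S) := by
      rw [Matrix.mul_smul, Matrix.smul_mul, mul_one]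
    have t2 : S * (S⁻¹ * (T - P) * S⁻¹) * S = T - P := by
      rw [show S * (S⁻¹ * (T - P) * S⁻¹) * S = (S * S⁻¹) * ((T - P) * (S⁻¹ * S)) by
        simp only [mul_assoc], hSinv, hSinv', one_mul, mul_one]
    have t3 : S * (S * (T - P)⁻¹ * S) * S = S * S * (T - P)⁻¹ * (S * S) := by
      simp only [mul_assoc]
    rw [mul_add, mul_add, add_mul, add_mul, t1, t2, t3]
  rw [lhs_eq]
  have rhs_eq : (S * S + (T - P)) * (T - P)⁻¹ * (S * S + (T - P))
      = (2 : ℝ) • (S * S) + (T - P) + S * S * (T - P)⁻¹ * (S * S) := by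
    have h1 : S * S * (T - P)⁻¹ * (T - P) = S * S := by
      rw [mul_assoc, hBinv', mul_one]
    rw [add_mul, add_mul, mul_add, mul_add, hBinv, h1, one_mul, one_mul]
    module
  rw [rhs_eq]
end

section
/- The candidate value functions V⁺(x,Z) := xᵀP_k x − γ² trace([I A] Z [I A]ᵀ) satisfy ℱV⁺_{k} = V⁺_{k+1}, where P_{k+1} is given by the H∞ Riccati recursion xᵀP_{k+1}x = min_u max_v { xᵀQx + uᵀRu − γ²|Ax+Bu−v|² + vᵀP_k v }; i.e., applying the Bellman operator to the 'known-sign' quadratic candidate reproduces the standard H∞ Riccati iteration, with the −γ² trace([I A]Z[I A]ᵀ) term absorbing the rank-one data update exactly. -/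
open Matrix


lemma trace_mul_vecMulVec_mul {k l : Type*} [Fintype k] [Fintype l] [DecidableEq k]
    (F : Matrix k l ℝ) (w : l → ℝ) :
    (F * vecMulVec w w * Fᵀ).trace = (F *ᵥ w) ⬝ᵥ (F *ᵥ w) := by
  have h : F * vecMulVec w w * Fᵀ = vecMulVec (F *ᵥ w) (F *ᵥ w) := by
    ext i j
    simp [mul_apply, vecMulVec_apply, mulVec, dotProduct, Finset.sum_mul, Finset.mul_sum]
    congr 1; ext a; congr 1; ext b; ring
  rw [h]
  simp [Matrix.trace, vecMulVec_apply, dotProduct, diag]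

/-- Applying the Bellman operator to the "known-sign" quadratic candidate
`V⁺_k(x,Z) = xᵀP_k x − γ² trace([I A] Z [I A]ᵀ)` reproduces the standard H∞
Riccati iteration: `ℱ V⁺_k = V⁺_{k+1}` where
`xᵀP_{k+1}x = min_u max_v { xᵀQx + uᵀRu − γ²|Ax+Bu−v|² + vᵀP_k v }`. -/
theorem stmt19 {n m : ℕ} (γ : ℝ) (hγ : 0 < γ)
    (A : Matrix (Fin n) (Fin n) ℝ) (B : Matrix (Fin n) (Fin m) ℝ)
    (Q : Matrix (Fin n) (Fin n) ℝ) (R : Matrix (Fin m) (Fin m) ℝ)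
    (hQ : Q.PosDef) (hR : R.PosDef)
    (Pk Pk1 : Matrix (Fin n) (Fin n) ℝ)
    (hPk : Pk.PosSemidef)
    (hPkγ : (γ ^ 2 • (1 : Matrix (Fin n) (Fin n) ℝ) - Pk).PosDef)
    (hPk1s : Pk1.IsSymm)
    (hRic : ∀ x : Fin n → ℝ,
      IsLeast {r : ℝ | ∃ u : Fin m → ℝ,
          IsGreatest {s : ℝ | ∃ v : Fin n → ℝ,
              s = x ⬝ᵥ Q *ᵥ x + u ⬝ᵥ R *ᵥ u
                - γ ^ 2 * ((A *ᵥ x + B *ᵥ u - v) ⬝ᵥ (A *ᵥ x + B *ᵥ u - v))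
                + v ⬝ᵥ Pk *ᵥ v} r}
        (x ⬝ᵥ Pk1 *ᵥ x))
    (Vk Vk1 : (Fin n → ℝ) → Matrix (Fin n ⊕ Fin n) (Fin n ⊕ Fin n) ℝ → ℝ)
    (hVk : ∀ x Z, Vk x Z = x ⬝ᵥ Pk *ᵥ x
      - γ ^ 2 * (fromCols (1 : Matrix (Fin n) (Fin n) ℝ) A * Z *
          (fromCols (1 : Matrix (Fin n) (Fin n) ℝ) A)ᵀ).trace)
    (hVk1 : ∀ x Z, Vk1 x Z = x ⬝ᵥ Pk1 *ᵥ x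
      - γ ^ 2 * (fromCols (1 : Matrix (Fin n) (Fin n) ℝ) A * Z *
          (fromCols (1 : Matrix (Fin n) (Fin n) ℝ) A)ᵀ).trace) :
    ∀ (x : Fin n → ℝ) (Z : Matrix (Fin n ⊕ Fin n) (Fin n ⊕ Fin n) ℝ),
      IsLeast {r : ℝ | ∃ u : Fin m → ℝ,
          IsGreatest {s : ℝ | ∃ v : Fin n → ℝ,
              s = x ⬝ᵥ Q *ᵥ x + u ⬝ᵥ R *ᵥ u +
                Vk v (Z + vecMulVec (Sum.elim (B *ᵥ u - v) x)
                  (Sum.elim (B *ᵥ u - v) x))} r}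
        (Vk1 x Z) := by
  intro x Z
  obtain ⟨⟨u₀, hg₀⟩, hlb⟩ := hRic x
  set F := fromCols (1 : Matrix (Fin n) (Fin n) ℝ) A with hF
  set c := γ ^ 2 * (F * Z * Fᵀ).trace with hc
  have key : ∀ (u : Fin m → ℝ) (v : Fin n → ℝ),
      x ⬝ᵥ Q *ᵥ x + u ⬝ᵥ R *ᵥ u +
        Vk v (Z + vecMulVec (Sum.elim (B *ᵥ u - v) x) (Sum.elim (B *ᵥ u - v) x))
      = (x ⬝ᵥ Q *ᵥ x + u ⬝ᵥ R *ᵥ u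
          - γ ^ 2 * ((A *ᵥ x + B *ᵥ u - v) ⬝ᵥ (A *ᵥ x + B *ᵥ u - v))
          + v ⬝ᵥ Pk *ᵥ v) - c := by
    intro u v
    rw [hVk]
    have hw : F *ᵥ Sum.elim (B *ᵥ u - v) x = A *ᵥ x + B *ᵥ u - v := by
      rw [hF, fromCols_mulVec_sumElim, Matrix.one_mulVec]
      abel
    have ht : (F * (Z + vecMulVec (Sum.elim (B *ᵥ u - v) x) (Sum.elim (B *ᵥ u - v) x)) * Fᵀ).trace
        = (F * Z * Fᵀ).trace
          + (A *ᵥ x + B *ᵥ u - v) ⬝ᵥ (A *ᵥ x + B *ᵥ u - v) := by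
      rw [Matrix.mul_add, Matrix.add_mul, trace_add, trace_mul_vecMulVec_mul, hw]
    rw [ht, hc]
    ring
  have hV1 : Vk1 x Z = x ⬝ᵥ Pk1 *ᵥ x - c := by rw [hVk1]
  constructor
  · refine ⟨u₀, ?_, ?_⟩
    · obtain ⟨v, hv⟩ := hg₀.1
      exact ⟨v, by rw [key, ← hv, hV1]⟩
    · rintro s ⟨v, rfl⟩
      rw [key, hV1]
      have := hg₀.2 ⟨v, rfl⟩
      linarith
  · rintro r ⟨u, hgr⟩
    have hIG : IsGreatest {s : ℝ | ∃ v : Fin n → ℝ,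
        s = x ⬝ᵥ Q *ᵥ x + u ⬝ᵥ R *ᵥ u
          - γ ^ 2 * ((A *ᵥ x + B *ᵥ u - v) ⬝ᵥ (A *ᵥ x + B *ᵥ u - v))
          + v ⬝ᵥ Pk *ᵥ v} (r + c) := by
      constructor
      · obtain ⟨v, hv⟩ := hgr.1
        rw [key] at hv
        exact ⟨v, by linarith⟩
      · rintro s ⟨v, rfl⟩
        have hmem : x ⬝ᵥ Q *ᵥ x + u ⬝ᵥ R *ᵥ u
            - γ ^ 2 * ((A *ᵥ x + B *ᵥ u - v) ⬝ᵥ (A *ᵥ x + B *ᵥ u - v))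
            + v ⬝ᵥ Pk *ᵥ v - c ∈ {s : ℝ | ∃ v : Fin n → ℝ,
              s = x ⬝ᵥ Q *ᵥ x + u ⬝ᵥ R *ᵥ u +
                Vk v (Z + vecMulVec (Sum.elim (B *ᵥ u - v) x)
                  (Sum.elim (B *ᵥ u - v) x))} := ⟨v, (key u v).symm⟩
        have := hgr.2 hmem
        linarith
    have := hlb ⟨u, hIG⟩
    rw [hV1]
    linarith
end
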